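/- For every n ≥ 6, the cycle C_n is a C-δ graph; that is, its vertices can be labeled v_1, …, v_n so that the subgraph of C_n induced by {v_1, v_2, v_3} is either K_3 or P_3, and for every m ≥ 4 the vertex v_m is adjacent in C_n to at most ⌊m/2 − 1⌋ of the prior vertices v_1, …, v_{m−1}. Equivalently, the complement of C_n (for n ≥ 6) is a δ-graph. -/

import Mathlib

/-- `G` is a C-δ graph: its vertices can be labeled `v 0, v 1, …, v (n-1)` so
that the subgraph induced by the first three vertices is `K₃` or `P₃` (i.e.
exactly three or exactly two edges among them, listed case by case), and for
each `m ≥ 4` (one-indexed, so `3 ≤ i` zero-indexed with `m = i + 1`), the vertex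
`v i` is adjacent to at most `⌊m/2 - 1⌋` of the prior vertices. -/
def IsCDeltaGraph {n : ℕ} (hn : 4 ≤ n) (G : SimpleGraph (Fin n))
    [DecidableRel G.Adj] : Prop :=
  ∃ v : Equiv.Perm (Fin n),
    (let a := v ⟨0, by omega⟩; let b := v ⟨1, by omega⟩; let c := v ⟨2, by omega⟩
     (G.Adj a b ∧ G.Adj a c ∧ G.Adj b c) ∨
     (G.Adj a b ∧ G.Adj a c ∧ ¬G.Adj b c) ∨
     (G.Adj a b ∧ ¬G.Adj a c ∧ G.Adj b c) ∨
     (¬G.Adj a b ∧ G.Adj a c ∧ G.Adj b c)) ∧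
    ∀ i : Fin n, 3 ≤ (i : ℕ) →
      (Finset.univ.filter (fun j : Fin n => j < i ∧ G.Adj (v i) (v j))).card ≤
        ((i : ℕ) + 1) / 2 - 1

/-- `G` is a δ-graph: its vertices can be labeled `v 0, v 1, …, v (n-1)` so that
the subgraph induced by the first three vertices is `3K₁` or `K₂ ⊔ K₁`, and for
each `m ≥ 4` (one-indexed, so `3 ≤ i` zero-indexed with `m = i + 1`), the vertex
`v i` is adjacent to all prior vertices except for at most `⌊m/2 - 1⌋` of them. -/
def IsDeltaGraph {n : ℕ} (hn : 4 ≤ n) (G : SimpleGraph (Fin n))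
    [DecidableRel G.Adj] : Prop :=
  ∃ v : Equiv.Perm (Fin n),
    (let a := v ⟨0, by omega⟩; let b := v ⟨1, by omega⟩; let c := v ⟨2, by omega⟩
     (¬G.Adj a b ∧ ¬G.Adj a c ∧ ¬G.Adj b c) ∨
     (G.Adj a b ∧ ¬G.Adj a c ∧ ¬G.Adj b c) ∨
     (¬G.Adj a b ∧ G.Adj a c ∧ ¬G.Adj b c) ∨
     (¬G.Adj a b ∧ ¬G.Adj a c ∧ G.Adj b c)) ∧
    ∀ i : Fin n, 3 ≤ (i : ℕ) →
      (Finset.univ.filter (fun j : Fin n => j < i ∧ ¬ G.Adj (v i) (v j))).card ≤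
        ((i : ℕ) + 1) / 2 - 1

/-- Adjacency in the cycle graph, in terms of natural-number values,
for `j < i`. -/
lemma cycAdjNat {n : ℕ} (hn : 6 ≤ n) {i j : Fin n} (hj : j < i) :
    (SimpleGraph.cycleGraph n).Adj i j ↔
      ((j : ℕ) + 1 = (i : ℕ) ∨ ((j : ℕ) = 0 ∧ (i : ℕ) + 1 = n)) := by
  have hj' : (j : ℕ) < (i : ℕ) := hj
  have hi : (i : ℕ) < n := i.isLt
  rw [SimpleGraph.cycleGraph_adj']
  have h1 : ((i - j) : Fin n).val = (i : ℕ) - (j : ℕ) := by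
    rw [Fin.sub_def]
    show (n - (j : ℕ) + (i : ℕ)) % n = (i : ℕ) - (j : ℕ)
    have h : n - (j : ℕ) + (i : ℕ) = n + ((i : ℕ) - (j : ℕ)) := by omega
    rw [h, Nat.add_mod_left, Nat.mod_eq_of_lt (by omega)]
  have h2 : ((j - i) : Fin n).val = n - ((i : ℕ) - (j : ℕ)) := by
    rw [Fin.sub_def]
    show (n - (i : ℕ) + (j : ℕ)) % n = n - ((i : ℕ) - (j : ℕ))
    rw [Nat.mod_eq_of_lt (by omega)]
    omega
  rw [h1, h2]
  omega

lemma cycCardBound {n : ℕ} (hn : 6 ≤ n) (i : Fin n) (hi : 3 ≤ (i : ℕ)) :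
    (Finset.univ.filter
        (fun j : Fin n => j < i ∧ (SimpleGraph.cycleGraph n).Adj i j)).card ≤
      ((i : ℕ) + 1) / 2 - 1 := by
  have hiLt : (i : ℕ) < n := i.isLt
  by_cases hlast : (i : ℕ) + 1 = n
  · have hsub : (Finset.univ.filter
        (fun j : Fin n => j < i ∧ (SimpleGraph.cycleGraph n).Adj i j)) ⊆
        {⟨(i : ℕ) - 1, by omega⟩, ⟨0, by omega⟩} := by
      intro j hj
      simp only [Finset.mem_filter, Finset.mem_univ, true_and] at hj
      rcases (cycAdjNat hn hj.1).mp hj.2 with h | h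
      · exact Finset.mem_insert.mpr (Or.inl
          (Fin.ext (show (j : ℕ) = (i : ℕ) - 1 by omega)))
      · exact Finset.mem_insert.mpr (Or.inr (by
          simp only [Finset.mem_singleton]
          exact Fin.ext (show (j : ℕ) = 0 by omega)))
    calc _ ≤ ({⟨(i : ℕ) - 1, by omega⟩, ⟨0, by omega⟩} : Finset (Fin n)).card :=
            Finset.card_le_card hsub
      _ ≤ 2 := Finset.card_insert_le _ _ |>.trans (by simp)
      _ ≤ ((i : ℕ) + 1) / 2 - 1 := by omega
  · have hsub : (Finset.univ.filter
        (fun j : Fin n => j < i ∧ (SimpleGraph.cycleGraph n).Adj i j)) ⊆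
        {⟨(i : ℕ) - 1, by omega⟩} := by
      intro j hj
      simp only [Finset.mem_filter, Finset.mem_univ, true_and] at hj
      rcases (cycAdjNat hn hj.1).mp hj.2 with h | h
      · exact Finset.mem_singleton.mpr
          (Fin.ext (show (j : ℕ) = (i : ℕ) - 1 by omega))
      · exact absurd h.2 hlast
    calc _ ≤ ({⟨(i : ℕ) - 1, by omega⟩} : Finset (Fin n)).card :=
            Finset.card_le_card hsub
      _ = 1 := Finset.card_singleton _
      _ ≤ ((i : ℕ) + 1) / 2 - 1 := by omega

/-- For every `n ≥ 6`, the cycle `Cₙ` is a C-δ graph and, equivalently, its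
complement is a δ-graph. -/
theorem cycleGraph_isCDeltaGraph {n : ℕ} (hn : 6 ≤ n) :
    IsCDeltaGraph (by omega) (SimpleGraph.cycleGraph n) ∧
    IsDeltaGraph (by omega) (SimpleGraph.cycleGraph n)ᶜ := by
  have h01 : (SimpleGraph.cycleGraph n).Adj ⟨1, by omega⟩ ⟨0, by omega⟩ :=
    (cycAdjNat hn (by simp [Fin.lt_def])).mpr (Or.inl rfl)
  have h12 : (SimpleGraph.cycleGraph n).Adj ⟨2, by omega⟩ ⟨1, by omega⟩ :=
    (cycAdjNat hn (by simp [Fin.lt_def])).mpr (Or.inl rfl)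
  have h02 : ¬ (SimpleGraph.cycleGraph n).Adj ⟨2, by omega⟩ ⟨0, by omega⟩ := by
    rw [cycAdjNat hn (by simp [Fin.lt_def])]
    show ¬((0 : ℕ) + 1 = 2 ∨ ((0 : ℕ) = 0 ∧ 2 + 1 = n))
    omega
  constructor
  · refine ⟨Equiv.refl _, ?_, ?_⟩
    · simp only [Equiv.refl_apply]
      exact Or.inr (Or.inr (Or.inl ⟨h01.symm, fun h => h02 h.symm, h12.symm⟩))
    · intro i hi
      convert cycCardBound hn i hi <;> exact Equiv.refl_apply _
  · refine ⟨Equiv.refl _, ?_, ?_⟩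
    · simp only [Equiv.refl_apply, SimpleGraph.compl_adj, not_and, not_not]
      refine Or.inr (Or.inr (Or.inl ⟨?_, ?_, ?_⟩))
      · exact fun _ => h01.symm
      · exact ⟨by simp [Fin.ext_iff], fun h => h02 h.symm⟩
      · exact fun _ => h12.symm
    · intro i hi
      have heq : (Finset.univ.filter
          (fun j : Fin n => j < i ∧
            ¬ (SimpleGraph.cycleGraph n)ᶜ.Adj ((Equiv.refl (Fin n)) i)
              ((Equiv.refl (Fin n)) j))) =
          (Finset.univ.filter
          (fun j : Fin n => j < i ∧ (SimpleGraph.cycleGraph n).Adj i j)) := by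
        apply Finset.filter_congr
        intro j _
        simp only [Equiv.refl_apply, SimpleGraph.compl_adj, not_and, not_not]
        constructor
        · rintro ⟨hji, h⟩
          exact ⟨hji, h (by intro he; exact absurd he.symm (Fin.ne_of_lt hji))⟩
        · rintro ⟨hji, h⟩
          exact ⟨hji, fun _ => h⟩
      rw [heq]
      exact cycCardBound hn i hi
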